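/- (First iteration of iterative sampling.) Consider a hitting-set instance with sets S_1,…,S_N ⊆ {1,…,n}, real weights w_i ≥ 0 not all zero, and p ∈ (0, 1/2], with n ≥ 1. Let Δ = max_i |S_i| ≥ 1, T = ⌈8pΔ⌉, q = 4p/T, and τ = ∑_{i=1}^N w_i·e^{−|S_i|·p}. Let X_1,…,X_n : Ω → {0,1} be pairwise independent random variables on a probability space with P(X_j = 1) = q, and for each i set Y_i = ∑_{j∈S_i} X_j − ∑_{j<k, j,k∈S_i} X_j·X_k. Then E[ (∑_{i=1}^N (1 − Y_i)·w_i·e^{−|S_i|(T−1)p/T})/τ + (∑_{j=1}^n X_j + 4n(T−1)p/T)/(4np) ] ≤ 2. -/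

import Mathlib

open MeasureTheory ProbabilityTheory

lemma aux01 {Ω : Type*} [MeasurableSpace Ω] (P : Measure Ω) [IsProbabilityMeasure P]
    (f : Ω → ℝ) (hf : Measurable f) (h01f : ∀ ω, f ω = 0 ∨ f ω = 1) :
    Integrable f P ∧ ∫ ω, f ω ∂P = (P {ω | f ω = 1}).toReal := by
  have hs : MeasurableSet {ω | f ω = 1} := hf (measurableSet_singleton 1)
  constructor
  · refine (integrable_const (1:ℝ)).mono' hf.aestronglyMeasurable ?_
    filter_upwards with ω
    rcases h01f ω with h | h <;> simp [h]
  · have h2 : ∫ ω, f ω ∂P = ∫ ω, Set.indicator {ω' | f ω' = 1} (fun _ => (1:ℝ)) ω ∂P := by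
      refine integral_congr_ae (Filter.Eventually.of_forall fun ω => ?_)
      rcases h01f ω with h | h <;> simp [Set.indicator, h]
    rw [h2, integral_indicator hs, setIntegral_const]
    simp
    rfl

theorem stmt11 {Ω : Type*} [MeasurableSpace Ω] (P : Measure Ω) [IsProbabilityMeasure P]
    (n N : ℕ) (hn : 1 ≤ n)
    (S : Fin N → Finset (Fin n)) (w : Fin N → ℝ)
    (hw : ∀ i, 0 ≤ w i) (hw0 : ∃ i, w i ≠ 0)
    (p : ℝ) (hp0 : 0 < p) (hp : p ≤ 1 / 2)
    (Δ : ℕ) (hΔ : Δ = Finset.univ.sup (fun i => (S i).card)) (hΔ1 : 1 ≤ Δ)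
    (T : ℕ) (hT : T = ⌈8 * p * (Δ : ℝ)⌉₊)
    (q : ℝ) (hq : q = 4 * p / (T : ℝ))
    (τ : ℝ) (hτ : τ = ∑ i, w i * Real.exp (-((S i).card : ℝ) * p))
    (X : Fin n → Ω → ℝ)
    (hmeas : ∀ j, Measurable (X j))
    (h01 : ∀ j ω, X j ω = 0 ∨ X j ω = 1)
    (hprob : ∀ j, P {ω | X j ω = 1} = ENNReal.ofReal q)
    (hindep : ∀ j k : Fin n, j ≠ k → IndepFun (X j) (X k) P)
    (Y : Fin N → Ω → ℝ)
    (hY : ∀ i ω, Y i ω = ∑ j ∈ S i, X j ω -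
        ∑ j ∈ S i, ∑ l ∈ (S i).filter (fun l => j < l), X j ω * X l ω) :
    ∫ ω, ((∑ i, (1 - Y i ω) * w i *
          Real.exp (-((S i).card : ℝ) * ((T - 1 : ℕ) : ℝ) * p / (T : ℝ))) / τ +
        ((∑ j, X j ω) + 4 * (n : ℝ) * ((T - 1 : ℕ) : ℝ) * p / (T : ℝ)) /
          (4 * (n : ℝ) * p)) ∂P ≤ 2 := by
  -- Basic numeric facts
  have hT0 : 0 < T := by
    rw [hT]; exact Nat.ceil_pos.2 (by positivity)
  have hTR : (0:ℝ) < T := by exact_mod_cast hT0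
  have hTge : 8 * p * (Δ : ℝ) ≤ (T : ℝ) := by rw [hT]; exact Nat.le_ceil _
  have hq0 : 0 ≤ q := by rw [hq]; positivity
  have hTm1 : ((T - 1 : ℕ) : ℝ) = (T : ℝ) - 1 := by
    have : ((T - 1 : ℕ) : ℝ) = (T:ℝ) - (1:ℕ) := Nat.cast_sub hT0
    simpa using this
  -- Integrability and integrals of the X's
  have hXint : ∀ j, Integrable (X j) P := fun j => (aux01 P (X j) (hmeas j) (h01 j)).1
  have hXval : ∀ j, ∫ ω, X j ω ∂P = q := by
    intro j
    rw [(aux01 P (X j) (hmeas j) (h01 j)).2, hprob j, ENNReal.toReal_ofReal hq0]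
  have hXXint : ∀ j l : Fin n, Integrable (fun ω => X j ω * X l ω) P := by
    intro j l
    refine (aux01 P _ ((hmeas j).mul (hmeas l)) ?_).1
    intro ω
    rcases h01 j ω with h | h <;> rcases h01 l ω with h' | h' <;> simp [h, h']
  have hXXval : ∀ j l : Fin n, j ≠ l → ∫ ω, X j ω * X l ω ∂P = q * q := by
    intro j l hjl
    have := (hindep j l hjl).integral_mul_eq_mul_integral (hmeas j).aestronglyMeasurable
      (hmeas l).aestronglyMeasurable
    rw [show (fun ω => X j ω * X l ω) = X j * X l from rfl, this, hXval, hXval]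
  -- Integrability and integral of Y i
  have hYint : ∀ i, Integrable (Y i) P := by
    intro i
    have : Y i = fun ω => (∑ j ∈ S i, X j ω) -
        ∑ j ∈ S i, ∑ l ∈ (S i).filter (fun l => j < l), X j ω * X l ω := by
      funext ω; exact hY i ω
    rw [this]
    exact (integrable_finset_sum _ fun j _ => hXint j).sub
      (integrable_finset_sum _ fun j _ => integrable_finset_sum _ fun l _ => hXXint j l)
  have hYval : ∀ i, ∫ ω, Y i ω ∂P =
      ((S i).card : ℝ) * q -
      (∑ j ∈ S i, (((S i).filter (fun l => j < l)).card : ℝ)) * (q * q) := by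
    intro i
    have h1 : ∫ ω, Y i ω ∂P = (∫ ω, ∑ j ∈ S i, X j ω ∂P) -
        ∫ ω, ∑ j ∈ S i, ∑ l ∈ (S i).filter (fun l => j < l), X j ω * X l ω ∂P := by
      rw [show (fun ω => Y i ω) = fun ω => (∑ j ∈ S i, X j ω) -
          ∑ j ∈ S i, ∑ l ∈ (S i).filter (fun l => j < l), X j ω * X l ω from
        funext fun ω => hY i ω]
      exact integral_sub (integrable_finset_sum _ fun j _ => hXint j)
        (integrable_finset_sum _ fun j _ => integrable_finset_sum _ fun l _ => hXXint j l)
    rw [h1, integral_finset_sum _ fun j _ => hXint j,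
      integral_finset_sum _ fun j _ => integrable_finset_sum _ fun l _ => hXXint j l]
    congr 1
    · rw [Finset.sum_congr rfl fun j _ => hXval j]
      simp [mul_comm]
    · rw [Finset.sum_mul]
      refine Finset.sum_congr rfl fun j hj => ?_
      rw [integral_finset_sum _ fun l _ => hXXint j l]
      rw [Finset.sum_congr rfl fun l hl => hXXval j l (Finset.mem_filter.1 hl).2.ne]
      simp [mul_comm]
  -- notation
  set E : Fin N → ℝ := fun i => Real.exp (-((S i).card : ℝ) * ((T - 1 : ℕ) : ℝ) * p / (T : ℝ)) with hE
  -- per-term expectation bound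
  have hterm : ∀ i, (1 - ∫ ω, Y i ω ∂P) * w i * E i ≤ w i * Real.exp (-((S i).card : ℝ) * p) := by
    intro i
    rw [hYval i]
    set c : ℝ := ((S i).card : ℝ) with hc
    have hc0 : 0 ≤ c := Nat.cast_nonneg _
    have hPc : (∑ j ∈ S i, (((S i).filter (fun l => j < l)).card : ℝ)) ≤ c * c := by
      calc (∑ j ∈ S i, (((S i).filter (fun l => j < l)).card : ℝ))
          ≤ ∑ _j ∈ S i, c := Finset.sum_le_sum fun j _ => by
            rw [hc]; exact_mod_cast Finset.card_filter_le _ _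
        _ = c * c := by rw [Finset.sum_const, nsmul_eq_mul]
    have hcΔ : c ≤ (Δ : ℝ) := by
      have h := hΔ ▸ Finset.le_sup (f := fun i => (S i).card) (Finset.mem_univ i)
      rw [hc]; exact_mod_cast h
    set x : ℝ := c * q with hx
    have hx0 : 0 ≤ x := mul_nonneg hc0 hq0
    have hxhalf : x ≤ 1 / 2 := by
      have h1 : x ≤ (Δ : ℝ) * q := mul_le_mul_of_nonneg_right hcΔ hq0
      have h2 : (Δ : ℝ) * q ≤ 1 / 2 := by
        rw [hq, mul_div_assoc', div_le_iff₀ hTR]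
        nlinarith [hTge]
      linarith
    have hA : 1 - (c * q - (∑ j ∈ S i, (((S i).filter (fun l => j < l)).card : ℝ)) * (q * q))
        ≤ Real.exp (-x / 4) := by
      have hq2 : (∑ j ∈ S i, (((S i).filter (fun l => j < l)).card : ℝ)) * (q * q) ≤ x * x := by
        calc (∑ j ∈ S i, (((S i).filter (fun l => j < l)).card : ℝ)) * (q * q)
            ≤ (c * c) * (q * q) := mul_le_mul_of_nonneg_right hPc (by positivity)
          _ = x * x := by rw [hx]; ring
      have hexp : -x / 4 + 1 ≤ Real.exp (-x / 4) := Real.add_one_le_exp _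
      nlinarith [hx0, hxhalf]
    have hEeq : Real.exp (-x / 4) * E i = Real.exp (-c * p) := by
      rw [hE, ← Real.exp_add]
      congr 1
      rw [hx, hq, hTm1]
      field_simp
      ring
    calc (1 - (c * q - (∑ j ∈ S i, (((S i).filter (fun l => j < l)).card : ℝ)) * (q * q)))
          * w i * E i
        = (1 - (c * q - (∑ j ∈ S i, (((S i).filter (fun l => j < l)).card : ℝ)) * (q * q)))
          * (w i * E i) := by ring
      _ ≤ Real.exp (-x / 4) * (w i * E i) := by
          apply mul_le_mul_of_nonneg_right hA
          exact mul_nonneg (hw i) (Real.exp_pos _).le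
      _ = w i * (Real.exp (-x / 4) * E i) := by ring
      _ = w i * Real.exp (-c * p) := by rw [hEeq]
  -- positivity of τ
  have hτ0 : 0 < τ := by
    obtain ⟨i0, hi0⟩ := hw0
    rw [hτ]
    refine Finset.sum_pos' (fun i _ => mul_nonneg (hw i) (Real.exp_pos _).le)
      ⟨i0, Finset.mem_univ i0, ?_⟩
    exact mul_pos ((hw i0).lt_of_ne (Ne.symm hi0)) (Real.exp_pos _)
  -- integrability pieces
  have hint1 : ∀ i : Fin N, Integrable (fun ω => (1 - Y i ω) * w i * E i) P := by
    intro i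
    exact (((integrable_const (1:ℝ)).sub (hYint i)).mul_const (w i)).mul_const (E i)
  have hg1 : Integrable (fun ω => (∑ i, (1 - Y i ω) * w i * E i) / τ) P :=
    (integrable_finset_sum _ fun i _ => hint1 i).div_const τ
  have hg2 : Integrable (fun ω => ((∑ j, X j ω) + 4 * (n : ℝ) * ((T - 1 : ℕ) : ℝ) * p / (T : ℝ))
      / (4 * (n : ℝ) * p)) P :=
    ((integrable_finset_sum _ fun j _ => hXint j).add (integrable_const _)).div_const _
  -- compute the integral
  rw [integral_add hg1 hg2, integral_div, integral_div,
    integral_finset_sum _ fun i _ => hint1 i,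
    integral_add (integrable_finset_sum _ fun j _ => hXint j) (integrable_const _),
    integral_finset_sum _ fun j _ => hXint j, integral_const]
  simp only [probReal_univ, one_smul]
  have hXsum : ∑ j : Fin n, ∫ ω, X j ω ∂P = (n : ℝ) * q := by
    rw [Finset.sum_congr rfl fun j _ => hXval j]
    simp [mul_comm]
  have hIi : ∀ i : Fin N, ∫ ω, (1 - Y i ω) * w i * E i ∂P = (1 - ∫ ω, Y i ω ∂P) * w i * E i := by
    intro i
    rw [integral_mul_const, integral_mul_const,
      integral_sub (integrable_const 1) (hYint i), integral_const]
    simp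
  rw [Finset.sum_congr rfl fun i _ => hIi i, hXsum]
  -- first summand ≤ 1
  have hn0 : (0:ℝ) < n := by exact_mod_cast hn
  have hfirst : (∑ i, (1 - ∫ ω, Y i ω ∂P) * w i * E i) / τ ≤ 1 := by
    rw [div_le_one hτ0, hτ]
    exact Finset.sum_le_sum fun i _ => hterm i
  have hsecond : ((n : ℝ) * q + 4 * (n : ℝ) * ((T - 1 : ℕ) : ℝ) * p / (T : ℝ))
      / (4 * (n : ℝ) * p) = 1 := by
    rw [hq, hTm1]
    field_simp
    ring
  rw [hsecond]
  linarith [hfirst]
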